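/- Let κ ∈ 𝐊 and σ̌ > 0. For every r ∈ (0,∞) with r ≠ R₁, the function f_{κ,σ̌} is twice differentiable at r and satisfies the differential inequality 2σ̌²·f''_{κ,σ̌}(r) − r·κ(r)·f'_{κ,σ̌}(r) ≤ −λ_{κ,σ̌}·f_{κ,σ̌}(r), where λ_{κ,σ̌} = σ̌²/𝒵. -/

import Mathlib

open Real MeasureTheory Set Filter

noncomputable section

/-- The class `𝐊` of monotonicity profiles: continuous on `(0,∞)`,
`∫₀¹ r (κ r)⁻ dr < ∞` and `liminf_{r→∞} κ(r) > 0`. -/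
def memK (κ : ℝ → ℝ) : Prop :=
  ContinuousOn κ (Set.Ioi 0) ∧
  MeasureTheory.IntegrableOn (fun r => r * max (-κ r) 0) (Set.Ioc 0 1) ∧
  ∃ ε > 0, ∀ᶠ r in Filter.atTop, ε ≤ κ r

/-- The set defining `R₀ = inf {R ≥ 0 : κ(r) ≥ 0 for all r ≥ R}`. -/
def R0set (κ : ℝ → ℝ) : Set ℝ := {R | 0 ≤ R ∧ ∀ r, 0 < r → R ≤ r → 0 ≤ κ r}

def R0 (κ : ℝ → ℝ) : ℝ := sInf (R0set κ)

/-- The set defining `R₁ = inf {R ≥ R₀ : R(R−R₀)·inf_{r ≥ R} κ(r) ≥ 4σ̌²}`. -/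
def R1set (κ : ℝ → ℝ) (σ : ℝ) : Set ℝ :=
  {R | R0 κ ≤ R ∧ ∀ r, 0 < r → R ≤ r → 4 * σ ^ 2 ≤ R * (R - R0 κ) * κ r}

def R1 (κ : ℝ → ℝ) (σ : ℝ) : ℝ := sInf (R1set κ σ)

/-- `φ(r) = exp(−(1/(2σ̌²)) ∫₀ʳ s (κ s)⁻ ds)`. -/
def phiF (κ : ℝ → ℝ) (σ : ℝ) (r : ℝ) : ℝ :=
  Real.exp (-(1 / (2 * σ ^ 2)) * ∫ s in (0:ℝ)..r, s * max (-κ s) 0)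

/-- `Φ(r) = ∫₀ʳ φ(s) ds`. -/
def PhiF (κ : ℝ → ℝ) (σ : ℝ) (r : ℝ) : ℝ := ∫ s in (0:ℝ)..r, phiF κ σ s

/-- `𝒵 = ∫₀^{R₁} Φ(s)/φ(s) ds`. -/
def Zconst (κ : ℝ → ℝ) (σ : ℝ) : ℝ :=
  ∫ s in (0:ℝ)..(R1 κ σ), PhiF κ σ s / phiF κ σ s

/-- `g(r) = 1 − (∫₀^{min(r,R₁)} Φ(s)/φ(s) ds)/(2𝒵)`. -/
def gF (κ : ℝ → ℝ) (σ : ℝ) (r : ℝ) : ℝ :=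
  1 - (∫ s in (0:ℝ)..(min r (R1 κ σ)), PhiF κ σ s / phiF κ σ s) / (2 * Zconst κ σ)

/-- `f_{κ,σ̌}(r) = ∫₀ʳ φ(s) g(s) ds`. -/
def fF (κ : ℝ → ℝ) (σ : ℝ) (r : ℝ) : ℝ := ∫ s in (0:ℝ)..r, phiF κ σ s * gF κ σ s

/-- `λ_{κ,σ̌} = σ̌²/𝒵`. -/
def lamConst (κ : ℝ → ℝ) (σ : ℝ) : ℝ := σ ^ 2 / Zconst κ σ

/-- `C_{κ,σ̌} = φ(R₀)/2`. -/
def CConst (κ : ℝ → ℝ) (σ : ℝ) : ℝ := phiF κ σ (R0 κ) / 2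

namespace Dev

variable {κ : ℝ → ℝ} {σ : ℝ}

/-- The function `H s = s (κ s)⁻`. -/
abbrev HF (κ : ℝ → ℝ) (s : ℝ) : ℝ := s * max (-κ s) 0

lemma H_cont (hκ : memK κ) : ContinuousOn (HF κ) (Ioi 0) :=
  fun x hx => (continuousWithinAt_id.mul (((hκ.1 x hx).neg).max continuousWithinAt_const))

/-- restricting interval integrability to a subinterval `[a,b] ⊆ [0,b]`. -/
lemma ii_sub {F : ℝ → ℝ} {a b : ℝ} (ha : 0 ≤ a) (hab : a ≤ b)
    (h : IntervalIntegrable F volume 0 b) : IntervalIntegrable F volume a b :=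
  h.mono_set (by rw [uIcc_of_le hab, uIcc_of_le (ha.trans hab)]
                 exact Icc_subset_Icc ha le_rfl)

lemma H_nonneg {s : ℝ} (hs : 0 ≤ s) : 0 ≤ HF κ s :=
  mul_nonneg hs (le_max_right _ _)

/-- A generic integrability lemma: continuous on `(0,∞)` and bounded on `(0,u]`. -/
lemma ii_of_bdd {F : ℝ → ℝ} {u M : ℝ} (hu : 0 ≤ u) (hF : ContinuousOn F (Ioi 0))
    (hM : ∀ s ∈ Ioc (0:ℝ) u, |F s| ≤ M) : IntervalIntegrable F volume 0 u := by
  rw [intervalIntegrable_iff, uIoc_of_le hu]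
  refine Integrable.mono' (integrable_const M)
    ((hF.mono Ioc_subset_Ioi_self).aestronglyMeasurable measurableSet_Ioc) ?_
  exact (ae_restrict_iff' measurableSet_Ioc).2 (Filter.Eventually.of_forall hM)

lemma H_ii (hκ : memK κ) {u : ℝ} (hu : 0 ≤ u) : IntervalIntegrable (HF κ) volume 0 u := by
  rw [intervalIntegrable_iff, uIoc_of_le hu]
  rcases le_or_gt u 1 with h | h
  · exact hκ.2.1.mono_set (Ioc_subset_Ioc le_rfl h)
  · have h1 : IntegrableOn (HF κ) (Ioc 0 1) volume := hκ.2.1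
    have h2 : IntegrableOn (HF κ) (Ioc 1 u) volume := by
      have : ContinuousOn (HF κ) (Icc 1 u) :=
        (H_cont hκ).mono (fun x hx => lt_of_lt_of_le one_pos hx.1)
      exact (this.integrableOn_Icc).mono_set Ioc_subset_Icc_self
    have : Ioc (0:ℝ) u = Ioc 0 1 ∪ Ioc 1 u := (Ioc_union_Ioc_eq_Ioc zero_le_one h.le).symm
    rw [this]
    exact h1.union h2

lemma R0set_nonempty (hκ : memK κ) : (R0set κ).Nonempty := by
  obtain ⟨ε, hε, hev⟩ := hκ.2.2
  obtain ⟨B, hB⟩ := Filter.eventually_atTop.1 hev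
  exact ⟨max B 0, le_max_right _ _, fun r _ hr =>
    le_trans hε.le (hB r (le_trans (le_max_left _ _) hr))⟩

lemma R0_nonneg (hκ : memK κ) : 0 ≤ R0 κ :=
  le_csInf (R0set_nonempty hκ) (fun R hR => hR.1)

lemma kappa_nonneg (hκ : memK κ) {s : ℝ} (hs : R0 κ < s) : 0 ≤ κ s := by
  obtain ⟨R, hR, hRs⟩ := (csInf_lt_iff ⟨0, fun R hR => hR.1⟩ (R0set_nonempty hκ)).1 hs
  exact hR.2 s (lt_of_le_of_lt (R0_nonneg hκ) hs) hRs.le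

lemma H_zero (hκ : memK κ) {s : ℝ} (hs : R0 κ < s) : HF κ s = 0 := by
  have : max (-κ s) 0 = 0 := max_eq_right (neg_nonpos.2 (kappa_nonneg hκ hs))
  simp [HF, this]

/-- Notation for `E r = ∫₀ʳ H`. -/
abbrev EF (κ : ℝ → ℝ) (r : ℝ) : ℝ := ∫ s in (0:ℝ)..r, HF κ s

lemma E_hasDeriv (hκ : memK κ) {r : ℝ} (hr : 0 < r) : HasDerivAt (EF κ) (HF κ r) r :=
  intervalIntegral.integral_hasDerivAt_right (H_ii hκ hr.le)
    ((H_cont hκ).stronglyMeasurableAtFilter isOpen_Ioi r hr)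
    ((H_cont hκ).continuousAt (Ioi_mem_nhds hr))

lemma E_mono (hκ : memK κ) {a b : ℝ} (ha : 0 ≤ a) (hab : a ≤ b) : EF κ a ≤ EF κ b := by
  have h1 : IntervalIntegrable (HF κ) volume 0 a := H_ii hκ ha
  have h2 : IntervalIntegrable (HF κ) volume a b := ii_sub ha hab (H_ii hκ (ha.trans hab))
  have := intervalIntegral.integral_add_adjacent_intervals h1 h2
  have hnn : 0 ≤ ∫ s in a..b, HF κ s :=
    intervalIntegral.integral_nonneg hab (fun u hu => H_nonneg (ha.trans hu.1))
  simp only [EF]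
  linarith [this]

lemma E_nonneg (hκ : memK κ) {u : ℝ} (hu : 0 ≤ u) : 0 ≤ EF κ u := by
  have : EF κ 0 = 0 := intervalIntegral.integral_same
  have := E_mono hκ le_rfl hu
  simpa [EF] using this

lemma E_const (hκ : memK κ) {a b : ℝ} (ha : R0 κ < a) (hab : a ≤ b) : EF κ b = EF κ a := by
  have h1 : IntervalIntegrable (HF κ) volume 0 a := H_ii hκ ((R0_nonneg hκ).trans_lt ha).le
  have h2 : IntervalIntegrable (HF κ) volume a b :=
    ii_sub ((R0_nonneg hκ).trans_lt ha).le hab (H_ii hκ (((R0_nonneg hκ).trans_lt ha).le.trans hab))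
  have hz : (∫ s in a..b, HF κ s) = 0 := by
    rw [intervalIntegral.integral_congr (g := fun _ => (0:ℝ))
      (fun s hs => H_zero hκ (lt_of_lt_of_le ha ?_))]
    · simp
    · rw [uIcc_of_le hab] at hs; exact hs.1
  have := intervalIntegral.integral_add_adjacent_intervals h1 h2
  simp only [EF]
  linarith [this]


/-! ### φ -/

lemma phi_pos (u : ℝ) : 0 < phiF κ σ u := Real.exp_pos _

lemma phi_le_one (hκ : memK κ) {u : ℝ} (hu : 0 ≤ u) : phiF κ σ u ≤ 1 := by
  have h1 : 0 ≤ EF κ u := E_nonneg hκ hu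
  have h2 : 0 ≤ 1 / (2 * σ ^ 2) := by positivity
  calc phiF κ σ u ≤ Real.exp 0 := Real.exp_le_exp.2 (by
        show -(1 / (2 * σ ^ 2)) * EF κ u ≤ 0
        nlinarith)
    _ = 1 := Real.exp_zero

lemma phi_anti (hκ : memK κ) {a b : ℝ} (ha : 0 ≤ a) (hab : a ≤ b) :
    phiF κ σ b ≤ phiF κ σ a := by
  apply Real.exp_le_exp.2
  show -(1 / (2 * σ ^ 2)) * EF κ b ≤ -(1 / (2 * σ ^ 2)) * EF κ a
  have h1 : EF κ a ≤ EF κ b := E_mono hκ ha hab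
  have h2 : 0 ≤ 1 / (2 * σ ^ 2) := by positivity
  nlinarith [h1, h2]

lemma phi_hasDeriv (hκ : memK κ) {r : ℝ} (hr : 0 < r) :
    HasDerivAt (phiF κ σ) (phiF κ σ r * (-(1 / (2 * σ ^ 2)) * HF κ r)) r := by
  have h1 : HasDerivAt (fun u => -(1 / (2 * σ ^ 2)) * EF κ u)
      (-(1 / (2 * σ ^ 2)) * HF κ r) r := (E_hasDeriv hκ hr).const_mul _
  exact h1.exp

lemma phi_cont (hκ : memK κ) : ContinuousOn (phiF κ σ) (Ioi 0) :=
  fun x hx => ((phi_hasDeriv hκ hx).continuousAt).continuousWithinAt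

lemma phi_const (hκ : memK κ) {a b : ℝ} (ha : R0 κ < a) (hab : a ≤ b) :
    phiF κ σ b = phiF κ σ a := by
  rw [phiF, phiF]
  have := E_const hκ ha hab
  simp only [EF] at this
  rw [this]

lemma phi_ii (hκ : memK κ) {u : ℝ} (hu : 0 ≤ u) :
    IntervalIntegrable (phiF κ σ) volume 0 u :=
  ii_of_bdd hu (phi_cont hκ) (fun s hs => by
    rw [abs_of_pos (phi_pos s)]
    exact phi_le_one hκ hs.1.le)

/-! ### Φ -/

lemma Phi_hasDeriv (hκ : memK κ) {r : ℝ} (hr : 0 < r) :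
    HasDerivAt (PhiF κ σ) (phiF κ σ r) r :=
  intervalIntegral.integral_hasDerivAt_right (phi_ii hκ hr.le)
    ((phi_cont hκ).stronglyMeasurableAtFilter isOpen_Ioi r hr)
    ((phi_cont hκ).continuousAt (Ioi_mem_nhds hr))

lemma Phi_cont (hκ : memK κ) : ContinuousOn (PhiF κ σ) (Ioi 0) :=
  fun x hx => ((Phi_hasDeriv hκ hx).continuousAt).continuousWithinAt

lemma Phi_nonneg (hκ : memK κ) {u : ℝ} (hu : 0 ≤ u) : 0 ≤ PhiF κ σ u :=
  intervalIntegral.integral_nonneg hu (fun s _ => (phi_pos (κ := κ) (σ := σ) s).le)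

lemma Phi_mono (hκ : memK κ) {a b : ℝ} (ha : 0 ≤ a) (hab : a ≤ b) :
    PhiF κ σ a ≤ PhiF κ σ b := by
  have h1 : IntervalIntegrable (phiF κ σ) volume 0 a := phi_ii hκ ha
  have h2 : IntervalIntegrable (phiF κ σ) volume a b := ii_sub ha hab (phi_ii hκ (ha.trans hab))
  have := intervalIntegral.integral_add_adjacent_intervals h1 h2
  have hnn : 0 ≤ ∫ s in a..b, phiF κ σ s :=
    intervalIntegral.integral_nonneg hab (fun s _ => (phi_pos (κ := κ) (σ := σ) s).le)
  simp only [PhiF]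
  linarith [this]

lemma Phi_le_self (hκ : memK κ) {u : ℝ} (hu : 0 ≤ u) : PhiF κ σ u ≤ u := by
  have := intervalIntegral.integral_mono_on (f := phiF κ σ) (g := fun _ => (1:ℝ)) hu
    (phi_ii hκ hu) intervalIntegrable_const (fun s hs => phi_le_one hκ hs.1)
  simpa [PhiF] using this

lemma Phi_lb (hκ : memK κ) {u : ℝ} (hu : 0 ≤ u) : u * phiF κ σ u ≤ PhiF κ σ u := by
  have := intervalIntegral.integral_mono_on (f := fun _ => phiF κ σ u) (g := phiF κ σ) hu
    intervalIntegrable_const (phi_ii hκ hu)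
    (fun s hs => phi_anti hκ hs.1 hs.2)
  simpa [PhiF, mul_comm] using this

lemma Phi_seg (hκ : memK κ) {a b : ℝ} (ha : R0 κ ≤ a) (hab : a ≤ b) :
    PhiF κ σ b = PhiF κ σ a + (b - a) * phiF κ σ b := by
  have h0a : 0 ≤ a := (R0_nonneg hκ).trans ha
  have h1 : IntervalIntegrable (phiF κ σ) volume 0 a := phi_ii hκ h0a
  have h2 : IntervalIntegrable (phiF κ σ) volume a b := ii_sub h0a hab (phi_ii hκ (h0a.trans hab))
  have hadd := intervalIntegral.integral_add_adjacent_intervals h1 h2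
  have hseg : (∫ s in a..b, phiF κ σ s) = (b - a) * phiF κ σ b := by
    rw [intervalIntegral.integral_of_le hab,
      setIntegral_congr_fun measurableSet_Ioc
        (g := fun _ => phiF κ σ b) (fun s hs => (phi_const hκ (ha.trans_lt hs.1) hs.2).symm)]
    simp [Real.volume_Ioc, ENNReal.toReal_ofReal (by linarith : (0:ℝ) ≤ b - a), hab]
  simp only [PhiF]
  linarith [hadd, hseg]

/-! ### W = Φ/φ and its primitive P -/

abbrev WF (κ : ℝ → ℝ) (σ : ℝ) (s : ℝ) : ℝ := PhiF κ σ s / phiF κ σ s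

abbrev PF (κ : ℝ → ℝ) (σ : ℝ) (u : ℝ) : ℝ := ∫ s in (0:ℝ)..u, WF κ σ s

lemma W_cont (hκ : memK κ) : ContinuousOn (WF κ σ) (Ioi 0) :=
  (Phi_cont hκ).div (phi_cont hκ) (fun x _ => (phi_pos x).ne')

lemma W_nonneg (hκ : memK κ) {s : ℝ} (hs : 0 ≤ s) : 0 ≤ WF κ σ s :=
  div_nonneg (Phi_nonneg hκ hs) (phi_pos s).le

lemma W_ii (hκ : memK κ) {u : ℝ} (hu : 0 ≤ u) : IntervalIntegrable (WF κ σ) volume 0 u := by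
  refine ii_of_bdd (M := u / phiF κ σ u) hu (W_cont hκ) (fun s hs => ?_)
  have h1 : PhiF κ σ s ≤ u := (Phi_le_self hκ hs.1.le).trans hs.2
  have h2 : phiF κ σ u ≤ phiF κ σ s := phi_anti hκ hs.1.le hs.2
  have h4 : 0 < phiF κ σ u := phi_pos u
  rw [abs_of_nonneg (W_nonneg hκ hs.1.le)]
  exact div_le_div₀ (hs.1.le.trans hs.2) h1 h4 h2

lemma P_hasDeriv (hκ : memK κ) {r : ℝ} (hr : 0 < r) :
    HasDerivAt (PF κ σ) (WF κ σ r) r :=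
  intervalIntegral.integral_hasDerivAt_right (W_ii hκ hr.le)
    ((W_cont hκ).stronglyMeasurableAtFilter isOpen_Ioi r hr)
    ((W_cont hκ).continuousAt (Ioi_mem_nhds hr))

lemma P_nonneg (hκ : memK κ) {u : ℝ} (hu : 0 ≤ u) : 0 ≤ PF κ σ u :=
  intervalIntegral.integral_nonneg hu (fun s hs => W_nonneg hκ hs.1)

lemma P_mono (hκ : memK κ) {a b : ℝ} (ha : 0 ≤ a) (hab : a ≤ b) :
    PF κ σ a ≤ PF κ σ b := by
  have h1 : IntervalIntegrable (WF κ σ) volume 0 a := W_ii hκ ha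
  have h2 : IntervalIntegrable (WF κ σ) volume a b := ii_sub ha hab (W_ii hκ (ha.trans hab))
  have := intervalIntegral.integral_add_adjacent_intervals h1 h2
  have hnn : 0 ≤ ∫ s in a..b, WF κ σ s :=
    intervalIntegral.integral_nonneg hab (fun s hs => W_nonneg hκ (ha.trans hs.1))
  simp only [PF]
  linarith [this]


/-! ### R1 -/

lemma R1set_nonempty (hκ : memK κ) (hσ : 0 < σ) : (R1set κ σ).Nonempty := by
  obtain ⟨ε, hε, hev⟩ := hκ.2.2
  obtain ⟨B, hB⟩ := Filter.eventually_atTop.1 hev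
  refine ⟨max B (R0 κ) + 1 + 4 * σ ^ 2 / ε, ?_, ?_⟩
  · have : R0 κ ≤ max B (R0 κ) := le_max_right _ _
    have : 0 ≤ 4 * σ ^ 2 / ε := by positivity
    linarith
  · intro r _ hr
    have hκr : ε ≤ κ r := hB r (by
      have h1 : B ≤ max B (R0 κ) := le_max_left _ _
      have h2 : 0 ≤ 4 * σ ^ 2 / ε := by positivity
      linarith)
    set R := max B (R0 κ) + 1 + 4 * σ ^ 2 / ε with hR
    have hR1 : 1 ≤ R := by
      have h1 : 0 ≤ max B (R0 κ) := le_trans (R0_nonneg hκ) (le_max_right _ _)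
      have h2 : 0 ≤ 4 * σ ^ 2 / ε := by positivity
      simp only [hR]; linarith
    have hRR0 : 4 * σ ^ 2 / ε ≤ R - R0 κ := by
      have : R0 κ ≤ max B (R0 κ) := le_max_right _ _
      simp only [hR]; linarith
    have hde : (4 * σ ^ 2 / ε) * ε = 4 * σ ^ 2 := by field_simp
    have h0 : 0 < ε := hε
    have hq : 0 ≤ 4 * σ ^ 2 / ε := by positivity
    have hsub : (0:ℝ) ≤ R - R0 κ := le_trans hq hRR0
    have hstep : 4 * σ ^ 2 ≤ (R - R0 κ) * κ r := by
      calc 4 * σ ^ 2 = (4 * σ ^ 2 / ε) * ε := hde.symm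
        _ ≤ (R - R0 κ) * κ r := mul_le_mul hRR0 hκr h0.le hsub
    calc 4 * σ ^ 2 ≤ (R - R0 κ) * κ r := hstep
      _ = 1 * ((R - R0 κ) * κ r) := (one_mul _).symm
      _ ≤ R * ((R - R0 κ) * κ r) := mul_le_mul_of_nonneg_right hR1 (le_trans (by positivity : (0:ℝ) ≤ 4 * σ ^ 2) hstep)
      _ = R * (R - R0 κ) * κ r := by ring

lemma R1_bddBelow : BddBelow (R1set κ σ) := ⟨R0 κ, fun R hR => hR.1⟩

lemma R0_le_R1 (hκ : memK κ) (hσ : 0 < σ) : R0 κ ≤ R1 κ σ :=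
  le_csInf (R1set_nonempty hκ hσ) (fun R hR => hR.1)

lemma R1set_elem_lt (hκ : memK κ) (hσ : 0 < σ) {x : ℝ} (hx : R1 κ σ < x) :
    ∃ R ∈ R1set κ σ, R < x :=
  (csInf_lt_iff R1_bddBelow (R1set_nonempty hκ hσ)).1 hx

lemma R0_lt_R1 (hκ : memK κ) (hσ : 0 < σ) : R0 κ < R1 κ σ := by
  by_contra hcon
  have heq : R1 κ σ = R0 κ := le_antisymm (not_lt.1 hcon) (R0_le_R1 hκ hσ)
  set r : ℝ := R0 κ + 1 with hrdef
  have hr0 : 0 < r := by have := R0_nonneg hκ; simp only [hrdef]; linarith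
  have hgen : ∀ δ : ℝ, 0 < δ → δ ≤ 1 → 4 * σ ^ 2 ≤ (R0 κ + 1) * δ * κ r := by
    intro δ hδ hδ1
    obtain ⟨R, hRmem, hRlt⟩ := R1set_elem_lt hκ hσ (x := R1 κ σ + δ) (by linarith)
    have hRR0 : R0 κ ≤ R := hRmem.1
    have hRub : R < R0 κ + δ := by rw [heq] at hRlt; linarith
    have hRr : R ≤ r := by simp only [hrdef]; linarith
    have hkey := hRmem.2 r hr0 hRr
    have hκr : 0 ≤ κ r := by
      by_contra hneg
      push_neg at hneg
      nlinarith [mul_nonneg (le_trans (R0_nonneg hκ) hRR0) (by linarith : (0:ℝ) ≤ R - R0 κ)]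
    have hb1 : R * (R - R0 κ) ≤ (R0 κ + 1) * δ := by
      have h1 : 0 ≤ R := le_trans (R0_nonneg hκ) hRR0
      nlinarith
    nlinarith [mul_le_mul_of_nonneg_right hb1 hκr]
  have hκr_pos : 0 < κ r := by
    have := hgen 1 one_pos le_rfl
    nlinarith [R0_nonneg hκ]
  set δ := min 1 (2 * σ ^ 2 / ((R0 κ + 1) * κ r)) with hδdef
  have hδpos : 0 < δ := lt_min one_pos (by positivity)
  have := hgen δ hδpos (min_le_left _ _)
  have hδle : δ ≤ 2 * σ ^ 2 / ((R0 κ + 1) * κ r) := min_le_right _ _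
  have hpos : 0 < (R0 κ + 1) * κ r := by nlinarith [R0_nonneg hκ]
  have : (R0 κ + 1) * δ * κ r ≤ 2 * σ ^ 2 := by
    have h2 := mul_le_mul_of_nonneg_right hδle hpos.le
    rw [div_mul_cancel₀] at h2
    · nlinarith
    · exact hpos.ne'
  nlinarith [hgen δ hδpos (min_le_left _ _), hσ]

lemma R1_pos (hκ : memK κ) (hσ : 0 < σ) : 0 < R1 κ σ :=
  lt_of_le_of_lt (R0_nonneg hκ) (R0_lt_R1 hκ hσ)

lemma kappa_R1_lb (hκ : memK κ) (hσ : 0 < σ) {r : ℝ} (hr : R1 κ σ < r) :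
    4 * σ ^ 2 ≤ R1 κ σ * (R1 κ σ - R0 κ) * κ r := by
  have hr0 : 0 < r := lt_trans (R1_pos hκ hσ) hr
  have hκr : 0 ≤ κ r := kappa_nonneg hκ (lt_trans (R0_lt_R1 hκ hσ) hr)
  have key : ∀ δ ∈ Ioi (0:ℝ), 4 * σ ^ 2 ≤ (R1 κ σ + δ) * (R1 κ σ + δ - R0 κ) * κ r := by
    intro δ hδ
    rw [mem_Ioi] at hδ
    obtain ⟨R, hRmem, hRlt⟩ := R1set_elem_lt hκ hσ (x := min (R1 κ σ + δ) r) (by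
      rw [lt_min_iff]; exact ⟨by linarith, hr⟩)
    have hRub : R < R1 κ σ + δ := lt_of_lt_of_le hRlt (min_le_left _ _)
    have hRr : R ≤ r := (lt_of_lt_of_le hRlt (min_le_right _ _)).le
    have hkey := hRmem.2 r hr0 hRr
    have hR0R : R0 κ ≤ R := hRmem.1
    have h0R : 0 ≤ R := le_trans (R0_nonneg hκ) hR0R
    have hmm : R * (R - R0 κ) ≤ (R1 κ σ + δ) * (R1 κ σ + δ - R0 κ) := by nlinarith
    nlinarith [mul_le_mul_of_nonneg_right hmm hκr]
  have htend : Filter.Tendsto (fun δ : ℝ => (R1 κ σ + δ) * (R1 κ σ + δ - R0 κ) * κ r)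
      (nhdsWithin 0 (Ioi 0)) (nhds (R1 κ σ * (R1 κ σ - R0 κ) * κ r)) := by
    have hc : Continuous (fun δ : ℝ => (R1 κ σ + δ) * (R1 κ σ + δ - R0 κ) * κ r) := by
      continuity
    have := hc.tendsto 0
    simp only [add_zero] at this
    exact this.mono_left nhdsWithin_le_nhds
  exact ge_of_tendsto htend (Filter.eventually_iff_exists_mem.2 ⟨Ioi 0, self_mem_nhdsWithin, key⟩)


/-! ### Z -/

lemma Z_val (hκ : memK κ) (hσ : 0 < σ) :
    Zconst κ σ = PF κ σ (R0 κ) +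
      ((R1 κ σ - R0 κ) * (PhiF κ σ (R0 κ) / phiF κ σ (R1 κ σ)) + (R1 κ σ - R0 κ) ^ 2 / 2) := by
  have h01 : R0 κ ≤ R1 κ σ := R0_le_R1 hκ hσ
  have h00 : 0 ≤ R0 κ := R0_nonneg hκ
  have h1 : IntervalIntegrable (WF κ σ) volume 0 (R0 κ) := W_ii hκ h00
  have h2 : IntervalIntegrable (WF κ σ) volume (R0 κ) (R1 κ σ) :=
    ii_sub h00 h01 (W_ii hκ (h00.trans h01))
  have hadd := intervalIntegral.integral_add_adjacent_intervals h1 h2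
  have hseg : (∫ s in (R0 κ)..(R1 κ σ), WF κ σ s)
      = (R1 κ σ - R0 κ) * (PhiF κ σ (R0 κ) / phiF κ σ (R1 κ σ)) + (R1 κ σ - R0 κ) ^ 2 / 2 := by
    have hcong : (∫ s in (R0 κ)..(R1 κ σ), WF κ σ s)
        = ∫ s in (R0 κ)..(R1 κ σ), (PhiF κ σ (R0 κ) / phiF κ σ (R1 κ σ)) + (s - R0 κ) := by
      rw [intervalIntegral.integral_of_le h01, intervalIntegral.integral_of_le h01]
      apply setIntegral_congr_fun measurableSet_Ioc
      intro s hs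
      have hphis : phiF κ σ s = phiF κ σ (R1 κ σ) := (phi_const hκ hs.1 hs.2).symm
      have hPhis : PhiF κ σ s = PhiF κ σ (R0 κ) + (s - R0 κ) * phiF κ σ s :=
        Phi_seg hκ le_rfl hs.1.le
      have hφ : phiF κ σ s ≠ 0 := (phi_pos s).ne'
      show PhiF κ σ s / phiF κ σ s = PhiF κ σ (R0 κ) / phiF κ σ (R1 κ σ) + (s - R0 κ)
      rw [hPhis, ← hphis]
      field_simp
    have hii1 : IntervalIntegrable (fun _ : ℝ => PhiF κ σ (R0 κ) / phiF κ σ (R1 κ σ))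
        volume (R0 κ) (R1 κ σ) := intervalIntegrable_const
    have hii2 : IntervalIntegrable (fun s : ℝ => s - R0 κ) volume (R0 κ) (R1 κ σ) :=
      ((continuous_id.sub continuous_const).intervalIntegrable _ _)
    rw [hcong, intervalIntegral.integral_add hii1 hii2]
    have hsum2 : (∫ s in (R0 κ)..(R1 κ σ), (s - R0 κ))
        = (R1 κ σ - R0 κ) ^ 2 / 2 := by
      have hii3 : IntervalIntegrable (fun s : ℝ => s) volume (R0 κ) (R1 κ σ) :=
        (continuous_id.intervalIntegrable _ _)
      have hii4 : IntervalIntegrable (fun _ : ℝ => R0 κ) volume (R0 κ) (R1 κ σ) :=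
        intervalIntegrable_const
      rw [intervalIntegral.integral_sub hii3 hii4, integral_id,
        intervalIntegral.integral_const, smul_eq_mul]
      ring
    rw [hsum2, intervalIntegral.integral_const]
    simp only [smul_eq_mul]
  show PF κ σ (R1 κ σ) = _
  simp only [PF] at hadd ⊢
  linarith [hadd, hseg]

lemma Z_pos (hκ : memK κ) (hσ : 0 < σ) : 0 < Zconst κ σ := by
  have h1 := Z_val hκ hσ
  have h2 : 0 ≤ PF κ σ (R0 κ) := P_nonneg hκ (R0_nonneg hκ)
  have h3 : 0 ≤ PhiF κ σ (R0 κ) / phiF κ σ (R1 κ σ) :=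
    div_nonneg (Phi_nonneg hκ (R0_nonneg hκ)) (phi_pos _).le
  have h4 : 0 < R1 κ σ - R0 κ := sub_pos.2 (R0_lt_R1 hκ hσ)
  nlinarith

lemma Z_lb1 (hκ : memK κ) (hσ : 0 < σ) :
    R1 κ σ * (R1 κ σ - R0 κ) ≤ 2 * Zconst κ σ := by
  have h1 := Z_val hκ hσ
  have h2 : 0 ≤ PF κ σ (R0 κ) := P_nonneg hκ (R0_nonneg hκ)
  have h4 : 0 < R1 κ σ - R0 κ := sub_pos.2 (R0_lt_R1 hκ hσ)
  have h5 : R0 κ ≤ PhiF κ σ (R0 κ) / phiF κ σ (R1 κ σ) := by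
    rw [le_div_iff₀ (phi_pos _)]
    calc R0 κ * phiF κ σ (R1 κ σ) ≤ R0 κ * phiF κ σ (R0 κ) :=
          mul_le_mul_of_nonneg_left (phi_anti hκ (R0_nonneg hκ) (R0_le_R1 hκ hσ)) (R0_nonneg hκ)
      _ ≤ PhiF κ σ (R0 κ) := Phi_lb hκ (R0_nonneg hκ)
  nlinarith [R0_nonneg hκ]

lemma Z_lb2 (hκ : memK κ) (hσ : 0 < σ) :
    (R1 κ σ - R0 κ) * PhiF κ σ (R1 κ σ) ≤ 2 * Zconst κ σ * phiF κ σ (R1 κ σ) := by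
  have h1 := Z_val hκ hσ
  have h2 : 0 ≤ PF κ σ (R0 κ) := P_nonneg hκ (R0_nonneg hκ)
  have h4 : 0 < R1 κ σ - R0 κ := sub_pos.2 (R0_lt_R1 hκ hσ)
  have h5 : PhiF κ σ (R1 κ σ) = PhiF κ σ (R0 κ) + (R1 κ σ - R0 κ) * phiF κ σ (R1 κ σ) :=
    Phi_seg hκ le_rfl (R0_le_R1 hκ hσ)
  have h6 : 0 < phiF κ σ (R1 κ σ) := phi_pos _
  have h7 : 0 ≤ PhiF κ σ (R0 κ) := Phi_nonneg hκ (R0_nonneg hκ)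
  have h8 : (PhiF κ σ (R0 κ) / phiF κ σ (R1 κ σ)) * phiF κ σ (R1 κ σ) = PhiF κ σ (R0 κ) := by
    field_simp
  nlinarith [mul_le_mul_of_nonneg_right (le_of_eq h1) h6.le]

/-! ### g -/

lemma g_le_one (hκ : memK κ) (hσ : 0 < σ) {u : ℝ} (hu : 0 ≤ u) : gF κ σ u ≤ 1 := by
  have h1 : 0 ≤ PF κ σ (min u (R1 κ σ)) :=
    P_nonneg hκ (le_min hu (R1_pos hκ hσ).le)
  have h2 : 0 < Zconst κ σ := Z_pos hκ hσ
  show 1 - PF κ σ (min u (R1 κ σ)) / (2 * Zconst κ σ) ≤ 1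
  have : 0 ≤ PF κ σ (min u (R1 κ σ)) / (2 * Zconst κ σ) := by positivity
  linarith

lemma g_ge_half (hκ : memK κ) (hσ : 0 < σ) {u : ℝ} (hu : 0 ≤ u) : 1/2 ≤ gF κ σ u := by
  have h1 : PF κ σ (min u (R1 κ σ)) ≤ Zconst κ σ := by
    have : PF κ σ (R1 κ σ) = Zconst κ σ := rfl
    rw [← this]
    exact P_mono hκ (le_min hu (R1_pos hκ hσ).le) (min_le_right _ _)
  have h2 : 0 < Zconst κ σ := Z_pos hκ hσ
  show 1/2 ≤ 1 - PF κ σ (min u (R1 κ σ)) / (2 * Zconst κ σ)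
  have hd : PF κ σ (min u (R1 κ σ)) / (2 * Zconst κ σ) ≤ 1/2 := by
    rw [div_le_iff₀ (by positivity)]
    linarith
  linarith

lemma g_cont (hκ : memK κ) (hσ : 0 < σ) : ContinuousOn (gF κ σ) (Ioi 0) := by
  intro u hu
  rw [mem_Ioi] at hu
  have hmin : 0 < min u (R1 κ σ) := lt_min hu (R1_pos hκ hσ)
  have h1 : ContinuousAt (fun v : ℝ => min v (R1 κ σ)) u :=
    (continuous_id.min continuous_const).continuousAt
  have h2 : ContinuousAt (PF κ σ) (min u (R1 κ σ)) := (P_hasDeriv hκ hmin).continuousAt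
  have h3 : ContinuousAt (fun v : ℝ => PF κ σ (min v (R1 κ σ))) u :=
    ContinuousAt.comp (g := PF κ σ) (f := fun v : ℝ => min v (R1 κ σ)) h2 h1
  exact (ContinuousAt.sub continuousAt_const (h3.div_const _)).continuousWithinAt

lemma g_eq_half (hκ : memK κ) (hσ : 0 < σ) {u : ℝ} (hu : R1 κ σ ≤ u) : gF κ σ u = 1/2 := by
  have hz : Zconst κ σ ≠ 0 := (Z_pos hκ hσ).ne'
  show 1 - PF κ σ (min u (R1 κ σ)) / (2 * Zconst κ σ) = 1/2
  rw [min_eq_right hu]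
  have : PF κ σ (R1 κ σ) = Zconst κ σ := rfl
  rw [this]
  field_simp
  ring

/-! ### f -/

lemma fg_ii (hκ : memK κ) (hσ : 0 < σ) {u : ℝ} (hu : 0 ≤ u) :
    IntervalIntegrable (fun s => phiF κ σ s * gF κ σ s) volume 0 u := by
  refine ii_of_bdd (M := 1) hu ((phi_cont hκ).mul (g_cont hκ hσ)) (fun s hs => ?_)
  rw [abs_mul, abs_of_pos (phi_pos s)]
  have h1 : |gF κ σ s| ≤ 1 := abs_le.2 ⟨by linarith [g_ge_half hκ hσ hs.1.le],
    g_le_one hκ hσ hs.1.le⟩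
  exact mul_le_one₀ (phi_le_one hκ hs.1.le) (abs_nonneg _) h1

lemma f_hasDeriv (hκ : memK κ) (hσ : 0 < σ) {r : ℝ} (hr : 0 < r) :
    HasDerivAt (fF κ σ) (phiF κ σ r * gF κ σ r) r :=
  intervalIntegral.integral_hasDerivAt_right (fg_ii hκ hσ hr.le)
    (((phi_cont hκ).mul (g_cont hκ hσ)).stronglyMeasurableAtFilter isOpen_Ioi r hr)
    ((((phi_cont hκ).mul (g_cont hκ hσ))).continuousAt (Ioi_mem_nhds hr))

lemma f_le_Phi (hκ : memK κ) (hσ : 0 < σ) {u : ℝ} (hu : 0 ≤ u) : fF κ σ u ≤ PhiF κ σ u := by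
  have := intervalIntegral.integral_mono_on (f := fun s => phiF κ σ s * gF κ σ s)
    (g := phiF κ σ) hu (fg_ii hκ hσ hu) (phi_ii hκ hu)
    (fun s hs => by
      show phiF κ σ s * gF κ σ s ≤ phiF κ σ s
      have h1 : gF κ σ s ≤ 1 := g_le_one hκ hσ hs.1
      nlinarith [phi_pos (κ := κ) (σ := σ) s])
  simpa [fF, PhiF] using this

lemma f_nonneg (hκ : memK κ) (hσ : 0 < σ) {u : ℝ} (hu : 0 ≤ u) : 0 ≤ fF κ σ u :=
  intervalIntegral.integral_nonneg hu (fun s hs =>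
    mul_nonneg (phi_pos s).le (by linarith [g_ge_half hκ hσ hs.1]))

lemma f_split (hκ : memK κ) (hσ : 0 < σ) {r : ℝ} (hr : R1 κ σ ≤ r) :
    fF κ σ r = fF κ σ (R1 κ σ) + (r - R1 κ σ) * (phiF κ σ (R1 κ σ) * (1/2)) := by
  have hR1 : 0 < R1 κ σ := R1_pos hκ hσ
  have h1 : IntervalIntegrable (fun s => phiF κ σ s * gF κ σ s) volume 0 (R1 κ σ) :=
    fg_ii hκ hσ hR1.le
  have h2 : IntervalIntegrable (fun s => phiF κ σ s * gF κ σ s) volume (R1 κ σ) r :=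
    ii_sub hR1.le hr (fg_ii hκ hσ (hR1.le.trans hr))
  have hadd := intervalIntegral.integral_add_adjacent_intervals h1 h2
  have hseg : (∫ s in (R1 κ σ)..r, phiF κ σ s * gF κ σ s)
      = (r - R1 κ σ) * (phiF κ σ (R1 κ σ) * (1/2)) := by
    rw [intervalIntegral.integral_congr (g := fun _ => phiF κ σ (R1 κ σ) * (1/2))
      (fun s hs => by
        rw [uIcc_of_le hr] at hs
        have hφ : phiF κ σ s = phiF κ σ (R1 κ σ) := by
          rcases eq_or_lt_of_le hs.1 with h | h
          · rw [← h]
          · exact phi_const hκ (R0_lt_R1 hκ hσ) hs.1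
        rw [hφ, g_eq_half hκ hσ hs.1]),
      intervalIntegral.integral_const]
    simp [smul_eq_mul]
  simp only [fF] at hadd ⊢
  linarith [hadd, hseg]

end Dev


open Dev

/-- for every `r ∈ (0,∞)` with `r ≠ R₁`, the function `f_{κ,σ̌}` is twice
differentiable at `r` (with first derivative `φ·g`) and its second derivative `D` there
satisfies `2σ̌² D − r κ(r) f'(r) ≤ −λ_{κ,σ̌} f(r)`. -/
theorem stmt3 (κ : ℝ → ℝ) (σ : ℝ) (hκ : memK κ) (hσ : 0 < σ) :
    ∀ r, 0 < r → r ≠ R1 κ σ →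
      HasDerivAt (fF κ σ) (phiF κ σ r * gF κ σ r) r ∧
      ∃ D : ℝ, HasDerivAt (fun s => phiF κ σ s * gF κ σ s) D r ∧
        2 * σ ^ 2 * D - r * κ r * (phiF κ σ r * gF κ σ r) ≤ -lamConst κ σ * fF κ σ r := by
  intro r hr hne
  have hZ : 0 < Zconst κ σ := Z_pos hκ hσ
  refine ⟨f_hasDeriv hκ hσ hr, ?_⟩
  rcases lt_or_gt_of_ne hne with hlt | hgt
  · -- case r < R1
    have hg' : HasDerivAt (gF κ σ) (-(WF κ σ r / (2 * Zconst κ σ))) r := by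
      have haux : HasDerivAt (fun u => 1 - PF κ σ u / (2 * Zconst κ σ))
          (0 - WF κ σ r / (2 * Zconst κ σ)) r :=
        (hasDerivAt_const r (1:ℝ)).sub ((P_hasDeriv hκ hr).div_const _)
      rw [zero_sub] at haux
      refine haux.congr_of_eventuallyEq ?_
      filter_upwards [Iio_mem_nhds hlt] with u hu
      show (1:ℝ) - PF κ σ (min u (R1 κ σ)) / (2 * Zconst κ σ) = _
      rw [min_eq_left (le_of_lt hu)]
    have hφ2 := phi_hasDeriv (σ := σ) hκ hr
    have hD := hφ2.mul hg'
    refine ⟨_, hD, ?_⟩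
    set p := phiF κ σ r with hp
    set G := gF κ σ r with hG
    set m := max (-κ r) 0 with hm
    set Z := Zconst κ σ with hZdef
    set Φr := PhiF κ σ r with hΦr
    have hppos : 0 < p := phi_pos r
    have hσ2 : (0:ℝ) < σ ^ 2 := by positivity
    have e1 : 2 * σ ^ 2 * (p * (-(1 / (2 * σ ^ 2)) * HF κ r) * G + p * -(WF κ σ r / (2 * Z)))
        = -(r * m * (p * G)) - σ ^ 2 * Φr / Z := by
      show 2 * σ ^ 2 * (p * (-(1 / (2 * σ ^ 2)) * (r * m)) * G + p * -((Φr / p) / (2 * Z)))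
        = -(r * m * (p * G)) - σ ^ 2 * Φr / Z
      field_simp
      ring
    have hid : m + κ r = max (κ r) 0 := by
      rcases le_total 0 (κ r) with h | h
      · rw [hm, max_eq_right (neg_nonpos.2 h), max_eq_left h, zero_add]
      · rw [hm, max_eq_left (neg_nonneg.2 h), max_eq_right h, neg_add_cancel]
    have eq2 : r * m * (p * G) + r * κ r * (p * G) = r * max (κ r) 0 * (p * G) := by
      rw [← hid]; ring
    have hGhalf : (1:ℝ)/2 ≤ G := g_ge_half hκ hσ hr.le
    have hA : 0 ≤ r * max (κ r) 0 * (p * G) := by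
      apply mul_nonneg (mul_nonneg hr.le (le_max_right _ _))
      nlinarith
    have hB : σ ^ 2 / Z * fF κ σ r ≤ σ ^ 2 * Φr / Z := by
      have hfΦ : fF κ σ r ≤ Φr := f_le_Phi hκ hσ hr.le
      have : σ ^ 2 / Z * fF κ σ r ≤ σ ^ 2 / Z * Φr :=
        mul_le_mul_of_nonneg_left hfΦ (by positivity)
      calc σ ^ 2 / Z * fF κ σ r ≤ σ ^ 2 / Z * Φr := this
        _ = σ ^ 2 * Φr / Z := by ring
    show 2 * σ ^ 2 * _ - r * κ r * (p * G) ≤ -lamConst κ σ * fF κ σ r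
    rw [lamConst]
    rw [← hZdef]
    linarith [e1, eq2, hA, hB]
  · -- case r > R1
    have hR1 : 0 < R1 κ σ := R1_pos hκ hσ
    have hφr : phiF κ σ r = phiF κ σ (R1 κ σ) := phi_const hκ (R0_lt_R1 hκ hσ) hgt.le
    have hgr : gF κ σ r = 1/2 := g_eq_half hκ hσ hgt.le
    have hconst : HasDerivAt (fun s => phiF κ σ s * gF κ σ s) 0 r := by
      have haux : HasDerivAt (fun _ : ℝ => phiF κ σ (R1 κ σ) * (1/2)) 0 r := hasDerivAt_const _ _
      refine haux.congr_of_eventuallyEq ?_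
      filter_upwards [Ioi_mem_nhds hgt] with u hu
      rw [phi_const hκ (R0_lt_R1 hκ hσ) (le_of_lt hu), g_eq_half hκ hσ (le_of_lt hu)]
    refine ⟨0, hconst, ?_⟩
    set Z := Zconst κ σ with hZdef
    set Q := R1 κ σ - R0 κ with hQ
    set φ1 := phiF κ σ (R1 κ σ) with hφ1
    set Φ1 := PhiF κ σ (R1 κ σ) with hΦ1
    have hQpos : 0 < Q := sub_pos.2 (R0_lt_R1 hκ hσ)
    have hφ1pos : 0 < φ1 := phi_pos _
    have h1 : 4 * σ ^ 2 ≤ R1 κ σ * Q * κ r := kappa_R1_lb hκ hσ hgt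
    have h2 : Q * Φ1 ≤ 2 * Z * φ1 := Z_lb2 hκ hσ
    have h3 : R1 κ σ * Q ≤ 2 * Z := Z_lb1 hκ hσ
    have h5 : fF κ σ (R1 κ σ) ≤ Φ1 := f_le_Phi hκ hσ hR1.le
    have hfr : fF κ σ r = fF κ σ (R1 κ σ) + (r - R1 κ σ) * (φ1 * (1/2)) := f_split hκ hσ hgt.le
    have hΦ1nn : 0 ≤ Φ1 := Phi_nonneg hκ hR1.le
    have hf1nn : 0 ≤ fF κ σ (R1 κ σ) := f_nonneg hκ hσ hR1.le
    have hrR1 : 0 ≤ r - R1 κ σ := sub_nonneg.2 hgt.le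
    have hRQpos : 0 < R1 κ σ * Q := mul_pos hR1 hQpos
    have hκr : 0 ≤ κ r := kappa_nonneg hκ (lt_trans (R0_lt_R1 hκ hσ) hgt)
    have hbig : (σ ^ 2 * fF κ σ r) * (R1 κ σ * Q) ≤ (r * κ r * (φ1 * (1/2)) * Z) * (R1 κ σ * Q) := by
      have hp1 : (4 * σ ^ 2) * (Z * φ1 * r) ≤ (R1 κ σ * Q * κ r) * (Z * φ1 * r) :=
        mul_le_mul_of_nonneg_right h1 (by positivity)
      have hp2 : (Q * Φ1) * (2 * σ ^ 2 * R1 κ σ) ≤ (2 * Z * φ1) * (2 * σ ^ 2 * R1 κ σ) :=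
        mul_le_mul_of_nonneg_right h2 (by positivity)
      have hp3 : (R1 κ σ * Q) * (σ ^ 2 * (r - R1 κ σ) * φ1)
          ≤ (2 * Z) * (σ ^ 2 * (r - R1 κ σ) * φ1) :=
        mul_le_mul_of_nonneg_right h3 (by positivity)
      have hp5 : fF κ σ (R1 κ σ) * (2 * σ ^ 2 * R1 κ σ * Q)
          ≤ Φ1 * (2 * σ ^ 2 * R1 κ σ * Q) :=
        mul_le_mul_of_nonneg_right h5 (by positivity)
      have hnn : 0 ≤ σ ^ 2 * Z * φ1 * (r - R1 κ σ) := by positivity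
      rw [hfr]
      nlinarith [hp1, hp2, hp3, hp5, hnn]
    have hbig2 : σ ^ 2 * fF κ σ r ≤ r * κ r * (φ1 * (1/2)) * Z :=
      (mul_le_mul_iff_of_pos_right hRQpos).1 hbig
    have hmain : σ ^ 2 / Z * fF κ σ r ≤ r * κ r * (φ1 * (1/2)) := by
      have : σ ^ 2 / Z * fF κ σ r = (σ ^ 2 * fF κ σ r) / Z := by ring
      rw [this, div_le_iff₀ hZ]
      exact hbig2
    rw [lamConst, ← hZdef, hφr, hgr]
    linarith [hmain]
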